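/- Let Q be the law of N = ⌊a₁r^{2/3}⌋ + ⌊a₂n^{2/3}⌋ independent Exp(1/2) random variables, and let Q̃ be the law where the first ⌊a₁r^{2/3}⌋ coordinates are Exp(1/2 − br^{−1/3}) and the remaining ⌊a₂n^{2/3}⌋ coordinates are Exp(1/2 + bn^{−1/3}), all independent. If |b| < ε₀ r^{1/3} for a sufficiently small absolute ε₀ and r ≤ n, then E_Q[(dQ̃/dQ)²] ≤ e^{C(a₁+a₂)b²} for an absolute constant C. -/

import Mathlib

open Real MeasureTheory ProbabilityTheory
open scoped ENNReal

theorem RN_lintegral_fin_prod :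
    ∀ (n : ℕ) (μ : Fin n → Measure ℝ), (∀ i, SigmaFinite (μ i)) →
    ∀ (f : Fin n → ℝ → ℝ≥0∞), (∀ i, Measurable (f i)) →
    ∫⁻ x : Fin n → ℝ, ∏ i, f i (x i) ∂(Measure.pi μ) = ∏ i, ∫⁻ x, f i x ∂(μ i) := by
  intro n
  induction n with
  | zero =>
    intro μ _ f _
    simp
  | succ n ih =>
    intro μ hσ f hf
    haveI := hσ
    have hp := measurePreserving_piFinSuccAbove μ 0
    have hmeas : Measurable (fun y : ℝ × (Fin n → ℝ) =>
        f 0 y.1 * ∏ j : Fin n, f ((0 : Fin (n+1)).succAbove j) (y.2 j)) :=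
      ((hf 0).comp measurable_fst).mul (Finset.measurable_prod _ fun j _ =>
        (hf _).comp ((measurable_pi_apply j).comp measurable_snd))
    have step1 : ∫⁻ x : Fin (n+1) → ℝ, ∏ i, f i (x i) ∂(Measure.pi μ)
        = ∫⁻ y, f 0 y.1 * ∏ j : Fin n, f ((0 : Fin (n+1)).succAbove j) (y.2 j)
            ∂((μ 0).prod (Measure.pi fun j => μ ((0 : Fin (n+1)).succAbove j))) := by
      rw [← hp.lintegral_comp hmeas]
      refine lintegral_congr fun x => ?_
      simp [MeasurableEquiv.piFinSuccAbove, Fin.prod_univ_succ, Fin.zero_succAbove, Fin.tail]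
    rw [step1, lintegral_prod_mul (f := f 0)
      (g := fun z : Fin n → ℝ => ∏ j : Fin n, f ((0 : Fin (n+1)).succAbove j) (z j))
      (hf 0).aemeasurable
      (Finset.measurable_prod _ fun j _ =>
        (hf _).comp (measurable_pi_apply j)).aemeasurable,
      ih _ (fun j => hσ _) _ (fun j => hf _), Fin.prod_univ_succ]
    simp [Fin.zero_succAbove]

theorem RN_pi_withDensity (n : ℕ) (μ ν : Fin n → Measure ℝ)
    [∀ i, SigmaFinite (μ i)] [∀ i, SigmaFinite (ν i)]
    (g : Fin n → ℝ → ℝ≥0∞) (hg : ∀ i, Measurable (g i))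
    (h : ∀ i, ν i = (μ i).withDensity (g i)) :
    Measure.pi ν = (Measure.pi μ).withDensity (fun x => ∏ i, g i (x i)) := by
  refine Measure.pi_eq fun s hs => ?_
  rw [withDensity_apply _ (MeasurableSet.univ_pi hs)]
  have hind : ∀ x : Fin n → ℝ, (Set.univ.pi s).indicator (fun x => ∏ i, g i (x i)) x
      = ∏ i, (s i).indicator (g i) (x i) := by
    intro x
    by_cases hx : x ∈ Set.univ.pi s
    · rw [Set.indicator_of_mem hx]
      exact Finset.prod_congr rfl fun i _ =>
        (Set.indicator_of_mem (hx i trivial) _).symm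
    · rw [Set.indicator_of_notMem hx]
      have : ∃ i, x i ∉ s i := by
        by_contra hc
        push_neg at hc
        exact hx fun i _ => hc i
      obtain ⟨i, hi⟩ := this
      exact (Finset.prod_eq_zero (Finset.mem_univ i)
        (Set.indicator_of_notMem hi _)).symm
  rw [← lintegral_indicator (MeasurableSet.univ_pi hs) _]
  simp_rw [hind]
  rw [RN_lintegral_fin_prod n μ (fun i => inferInstance) _
    (fun i => (hg i).indicator (hs i))]
  refine Finset.prod_congr rfl fun i _ => ?_
  rw [h i, withDensity_apply _ (hs i), ← lintegral_indicator (hs i) _]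

lemma RN_sum_ite (N m : ℕ) (hm : m ≤ N) (A B : ℝ) :
    ∑ i : Fin N, (if (i:ℕ) < m then A else B) = m * A + (N - m : ℕ) * B := by
  rw [Fin.sum_univ_eq_sum_range (fun i => if i < m then A else B) N,
    Finset.range_eq_Ico, ← Finset.sum_Ico_consecutive _ (Nat.zero_le m) hm]
  rw [Finset.sum_congr rfl (fun i hi => if_pos (Finset.mem_Ico.mp hi).2),
    Finset.sum_congr rfl (fun i hi => if_neg (not_lt.mpr (Finset.mem_Ico.mp hi).1)),
    Finset.sum_const, Finset.sum_const, Nat.card_Ico, Nat.card_Ico, Nat.sub_zero,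
    nsmul_eq_mul, nsmul_eq_mul]

lemma RN_measurable_expPDF (ρ : ℝ) : Measurable (exponentialPDF ρ) :=
  (measurable_exponentialPDFReal ρ).ennreal_ofReal

/-- Tilting identity: `Exp(1/2 - δ)` as a density against `Exp(1/2)`. -/
lemma RN_exp_withDensity (δ : ℝ) :
    expMeasure (1/2 - δ) = (expMeasure (1/2)).withDensity
      (fun x => ENNReal.ofReal ((1 - 2*δ) * Real.exp (δ * x))) := by
  have hg : Measurable (fun x : ℝ => ENNReal.ofReal ((1 - 2*δ) * Real.exp (δ * x))) := by
    fun_prop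
  rw [show expMeasure (1/2 : ℝ) = volume.withDensity (exponentialPDF (1/2)) from rfl,
    ← withDensity_mul _ (RN_measurable_expPDF _) hg]
  show expMeasure (1/2 - δ) = volume.withDensity _
  rw [show expMeasure (1/2 - δ) = volume.withDensity (exponentialPDF (1/2 - δ)) from rfl]
  congr 1
  funext x
  rcases le_or_gt 0 x with hx | hx
  · rw [Pi.mul_apply, exponentialPDF_of_nonneg hx, exponentialPDF_of_nonneg hx,
      ← ENNReal.ofReal_mul (by positivity)]
    congr 1
    have he : Real.exp (-(1/2 * x)) * Real.exp (δ * x) = Real.exp (-((1/2 - δ) * x)) := by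
      rw [← Real.exp_add]; ring_nf
    calc (1/2 - δ) * Real.exp (-((1/2 - δ) * x))
        = (1/2) * (1 - 2*δ) * (Real.exp (-(1/2 * x)) * Real.exp (δ * x)) := by
          rw [he]; ring
      _ = 1/2 * Real.exp (-(1/2 * x)) * ((1 - 2*δ) * Real.exp (δ * x)) := by ring
  · rw [Pi.mul_apply, exponentialPDF_of_neg hx, exponentialPDF_of_neg hx, zero_mul]

/-- Value of the second moment lintegral for a single coordinate. -/
lemma RN_lintegral_sq (δ : ℝ) (h : |δ| < 1/8) :
    ∫⁻ x, ENNReal.ofReal (((1 - 2*δ) * Real.exp (δ * x))^2) ∂(expMeasure (1/2))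
      = ENNReal.ofReal ((1 - 2*δ)^2 / (1 - 4*δ)) := by
  obtain ⟨h1, h2⟩ := abs_lt.mp h
  have h4 : (0:ℝ) < 1 - 4*δ := by linarith
  have hpos : (0:ℝ) < 1/2 - 2*δ := by linarith
  have hk : (0:ℝ) ≤ (1 - 2*δ)^2 / (1 - 4*δ) := by positivity
  have hf : Measurable (fun x : ℝ => ENNReal.ofReal (((1 - 2*δ) * Real.exp (δ * x))^2)) := by
    fun_prop
  rw [show expMeasure (1/2 : ℝ) = volume.withDensity (exponentialPDF (1/2)) from rfl,
    lintegral_withDensity_eq_lintegral_mul _ (RN_measurable_expPDF _) hf]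
  have key : ∀ x : ℝ, (exponentialPDF (1/2) * fun x => ENNReal.ofReal (((1 - 2*δ) * Real.exp (δ * x))^2)) x
      = ENNReal.ofReal ((1 - 2*δ)^2 / (1 - 4*δ)) * exponentialPDF (1/2 - 2*δ) x := by
    intro x
    rcases le_or_gt 0 x with hx | hx
    · rw [Pi.mul_apply, exponentialPDF_of_nonneg hx, exponentialPDF_of_nonneg hx,
        ← ENNReal.ofReal_mul (by positivity), ← ENNReal.ofReal_mul hk]
      congr 1
      have he : Real.exp (-(1/2 * x)) * Real.exp (δ * x) ^ 2 = Real.exp (-((1/2 - 2*δ) * x)) := by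
        rw [sq, ← Real.exp_add, ← Real.exp_add]; ring_nf
      have hk2 : (1 - 2*δ)^2/(1 - 4*δ) * (1/2 - 2*δ) = (1 - 2*δ)^2/2 := by
        rw [div_mul_eq_mul_div, div_eq_div_iff h4.ne' two_ne_zero]; ring
      calc 1/2 * Real.exp (-(1/2 * x)) * ((1 - 2*δ) * Real.exp (δ * x))^2
          = (1 - 2*δ)^2/2 * (Real.exp (-(1/2 * x)) * Real.exp (δ * x) ^ 2) := by ring
        _ = (1 - 2*δ)^2/2 * Real.exp (-((1/2 - 2*δ) * x)) := by rw [he]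
        _ = (1 - 2*δ)^2/(1 - 4*δ) * ((1/2 - 2*δ) * Real.exp (-((1/2 - 2*δ) * x))) := by
            rw [← mul_assoc, hk2]
    · rw [Pi.mul_apply, exponentialPDF_of_neg hx, exponentialPDF_of_neg hx, zero_mul, mul_zero]
  simp_rw [key]
  rw [lintegral_const_mul _ (RN_measurable_expPDF _),
    lintegral_exponentialPDF_eq_one hpos, mul_one]

/-- Per-coordinate bound on the chi-square factor. -/
lemma RN_factor_le (δ : ℝ) (h : |δ| < 1/8) :
    (1 - 2*δ)^2 / (1 - 4*δ) ≤ Real.exp (8 * δ^2) := by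
  obtain ⟨h1, h2⟩ := abs_lt.mp h
  have h4 : (0:ℝ) < 1 - 4*δ := by linarith
  have hcube : 0 ≤ δ^2 * (1 - 8*δ) := mul_nonneg (sq_nonneg δ) (by linarith)
  have h2' : (1 - 2*δ)^2 / (1 - 4*δ) ≤ 1 + 8*δ^2 := by
    rw [div_le_iff₀ h4]; nlinarith
  have := Real.add_one_le_exp (8 * δ^2)
  linarith

set_option maxHeartbeats 2000000 in
/-- Change-of-measure second moment bound for perturbed exponential product measures.
Q is the law of N = ⌊a₁r^{2/3}⌋ + ⌊a₂n^{2/3}⌋ i.i.d. Exp(1/2) variables; Q̃ makes the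
first ⌊a₁r^{2/3}⌋ coordinates Exp(1/2 − br^{−1/3}) and the rest Exp(1/2 + bn^{−1/3}).
If |b| < ε₀ r^{1/3} (ε₀ a small absolute constant) and r ≤ n, then
E_Q[(dQ̃/dQ)²] ≤ e^{C(a₁+a₂)b²} for an absolute constant C. -/
theorem RN_second_moment_product_bound :
    ∃ ε₀ > (0:ℝ), ∃ C > (0:ℝ),
      ∀ (a₁ a₂ b : ℝ) (r n : ℕ), 0 < a₁ → 0 < a₂ → 0 < r → r ≤ n →
        |b| < ε₀ * (r:ℝ)^((1:ℝ)/3) →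
        ∀ (m N : ℕ), m = ⌊a₁ * (r:ℝ)^((2:ℝ)/3)⌋₊ →
          N = ⌊a₁ * (r:ℝ)^((2:ℝ)/3)⌋₊ + ⌊a₂ * (n:ℝ)^((2:ℝ)/3)⌋₊ →
        ∀ (Q Qt : Measure (Fin N → ℝ)),
          Q = Measure.pi (fun _ : Fin N => expMeasure (1/2)) →
          Qt = Measure.pi (fun i : Fin N =>
            if (i : ℕ) < m then expMeasure (1/2 - b * (r:ℝ)^(-(1:ℝ)/3))
            else expMeasure (1/2 + b * (n:ℝ)^(-(1:ℝ)/3))) →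
          ∫ x, ((Qt.rnDeriv Q x).toReal)^2 ∂Q ≤ Real.exp (C * (a₁ + a₂) * b^2) := by
  refine ⟨1/8, by norm_num, 8, by norm_num, ?_⟩
  intro a₁ a₂ b r n ha₁ ha₂ hr hrn hb m N hm hN Q Qt hQ hQt
  subst hQ hQt
  have hrR : (0:ℝ) < r := Nat.cast_pos.mpr hr
  have hnR : (0:ℝ) < n := lt_of_lt_of_le hrR (Nat.cast_le.mpr hrn)
  set δ₁ : ℝ := b * (r:ℝ)^(-(1:ℝ)/3) with hδ₁
  set δ₂ : ℝ := -(b * (n:ℝ)^(-(1:ℝ)/3)) with hδ₂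
  have hrinv : (r:ℝ)^((1:ℝ)/3) * (r:ℝ)^(-(1:ℝ)/3) = 1 := by
    rw [← Real.rpow_add hrR]; norm_num
  have hrp : (0:ℝ) < (r:ℝ)^(-(1:ℝ)/3) := Real.rpow_pos_of_pos hrR _
  have hnp : (0:ℝ) < (n:ℝ)^(-(1:ℝ)/3) := Real.rpow_pos_of_pos hnR _
  have habs1 : |δ₁| < 1/8 := by
    rw [hδ₁, abs_mul, abs_of_pos hrp]
    calc |b| * (r:ℝ)^(-(1:ℝ)/3) < (1/8 * (r:ℝ)^((1:ℝ)/3)) * (r:ℝ)^(-(1:ℝ)/3) :=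
          mul_lt_mul_of_pos_right hb hrp
      _ = 1/8 := by rw [mul_assoc, hrinv, mul_one]
  have hle : (n:ℝ)^(-(1:ℝ)/3) ≤ (r:ℝ)^(-(1:ℝ)/3) := by
    have h13 : (r:ℝ)^((1:ℝ)/3) ≤ (n:ℝ)^((1:ℝ)/3) :=
      Real.rpow_le_rpow hrR.le (Nat.cast_le.mpr hrn) (by norm_num)
    rw [show (-(1:ℝ)/3) = -((1:ℝ)/3) by norm_num, Real.rpow_neg hrR.le,
      Real.rpow_neg hnR.le]
    exact inv_anti₀ (Real.rpow_pos_of_pos hrR _) h13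
  have habs2 : |δ₂| < 1/8 := by
    rw [hδ₂, abs_neg, abs_mul, abs_of_pos hnp]
    calc |b| * (n:ℝ)^(-(1:ℝ)/3) ≤ |b| * (r:ℝ)^(-(1:ℝ)/3) :=
          mul_le_mul_of_nonneg_left hle (abs_nonneg b)
      _ < 1/8 := by rw [← abs_of_pos hrp, ← abs_mul, ← hδ₁]; exact habs1
  set δi : Fin N → ℝ := fun i => if (i:ℕ) < m then δ₁ else δ₂ with hδi
  have hδabs : ∀ i, |δi i| < 1/8 := by
    intro i; rw [hδi]; dsimp only; split
    · exact habs1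
    · exact habs2
  have h2δ : ∀ i, (0:ℝ) < 1 - 2 * δi i := fun i => by
    have := (abs_lt.mp (hδabs i)).2; linarith
  have h4δ : ∀ i, (0:ℝ) < 1 - 4 * δi i := fun i => by
    have := (abs_lt.mp (hδabs i)).2; linarith
  set g : Fin N → ℝ → ℝ≥0∞ :=
    fun i x => ENNReal.ofReal ((1 - 2 * δi i) * Real.exp (δi i * x)) with hgdef
  have hg : ∀ i, Measurable (g i) := fun i => by rw [hgdef]; fun_prop
  have hν : (fun i : Fin N =>
      if (i : ℕ) < m then expMeasure (1/2 - b * (r:ℝ)^(-(1:ℝ)/3))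
      else expMeasure (1/2 + b * (n:ℝ)^(-(1:ℝ)/3)))
      = fun i => expMeasure (1/2 - δi i) := by
    funext i; rw [hδi]; dsimp only; split
    · rfl
    · rw [sub_neg_eq_add]
  haveI hPμ : IsProbabilityMeasure (expMeasure (1/2 : ℝ)) :=
    isProbabilityMeasure_expMeasure (by norm_num)
  have hPν : ∀ i, IsProbabilityMeasure (expMeasure (1/2 - δi i)) := fun i =>
    isProbabilityMeasure_expMeasure (by have := (abs_lt.mp (hδabs i)).2; linarith)
  haveI hσμ : ∀ i : Fin N, SigmaFinite ((fun _ : Fin N => expMeasure (1/2 : ℝ)) i) :=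
    fun i => inferInstance
  haveI hσν : ∀ i : Fin N, SigmaFinite ((fun i : Fin N => expMeasure (1/2 - δi i)) i) :=
    fun i => by haveI := hPν i; infer_instance
  haveI : ∀ i : Fin N, IsProbabilityMeasure ((fun _ : Fin N => expMeasure (1/2 : ℝ)) i) :=
    fun i => hPμ
  haveI hQP : IsProbabilityMeasure (Measure.pi (fun _ : Fin N => expMeasure (1/2 : ℝ))) :=
    inferInstance
  have hQt2 : Measure.pi (fun i : Fin N => expMeasure (1/2 - δi i))
      = (Measure.pi (fun _ : Fin N => expMeasure (1/2 : ℝ))).withDensity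
          (fun x => ∏ i, g i (x i)) :=
    RN_pi_withDensity N _ _ g hg (fun i => RN_exp_withDensity (δi i))
  have hG : Measurable (fun x : Fin N → ℝ => ∏ i, g i (x i)) :=
    Finset.measurable_prod _ fun i _ => (hg i).comp (measurable_pi_apply i)
  rw [hν, hQt2]
  have hrn2 := Measure.rnDeriv_withDensity
    (Measure.pi (fun _ : Fin N => expMeasure (1/2 : ℝ))) hG
  set H : (Fin N → ℝ) → ℝ :=
    fun x => ∏ i, ((1 - 2 * δi i) * Real.exp (δi i * (x i)))^2 with hHdef
  have hae : (fun x => ((((Measure.pi (fun _ : Fin N => expMeasure (1/2 : ℝ))).withDensity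
      (fun x => ∏ i, g i (x i))).rnDeriv
      (Measure.pi (fun _ : Fin N => expMeasure (1/2 : ℝ))) x).toReal)^2) =ᵐ[
      Measure.pi (fun _ : Fin N => expMeasure (1/2 : ℝ))] H := by
    filter_upwards [hrn2] with x hx
    rw [hx, hHdef]
    dsimp only
    rw [ENNReal.toReal_prod, ← Finset.prod_pow]
    refine Finset.prod_congr rfl fun i _ => ?_
    rw [hgdef]
    dsimp only
    rw [ENNReal.toReal_ofReal (mul_nonneg (h2δ i).le (Real.exp_pos _).le)]
  rw [integral_congr_ae hae]
  have hHm : Measurable H := by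
    rw [hHdef]
    exact Finset.measurable_prod _ fun i _ => by fun_prop
  have hH0 : 0 ≤ᵐ[Measure.pi (fun _ : Fin N => expMeasure (1/2 : ℝ))] H :=
    Filter.Eventually.of_forall fun x => Finset.prod_nonneg fun i _ => sq_nonneg _
  rw [integral_eq_lintegral_of_nonneg_ae hH0 hHm.aestronglyMeasurable]
  have hHof : ∀ x, ENNReal.ofReal (H x)
      = ∏ i, ENNReal.ofReal (((1 - 2 * δi i) * Real.exp (δi i * (x i)))^2) := by
    intro x
    rw [hHdef]
    exact ENNReal.ofReal_prod_of_nonneg fun i _ => sq_nonneg _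
  simp_rw [hHof]
  rw [RN_lintegral_fin_prod N _ (fun i => inferInstance)
    (fun i x => ENNReal.ofReal (((1 - 2 * δi i) * Real.exp (δi i * x))^2))
    (fun i => by fun_prop),
    Finset.prod_congr rfl (fun i _ => RN_lintegral_sq (δi i) (hδabs i)),
    ENNReal.toReal_prod,
    Finset.prod_congr rfl (fun (i : Fin N) _ => ENNReal.toReal_ofReal
      (by have := h4δ i; positivity : (0:ℝ) ≤ (1 - 2*δi i)^2 / (1 - 4*δi i)))]
  -- now: ∏ i, (1 - 2*δi i)^2/(1 - 4*δi i) ≤ exp (8 * (a₁+a₂) * b^2)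
  have hmN : m ≤ N := by omega
  have hNm : N - m = ⌊a₂ * (n:ℝ)^((2:ℝ)/3)⌋₊ := by omega
  have hr2 : (r:ℝ)^((2:ℝ)/3) * ((r:ℝ)^(-(1:ℝ)/3))^2 = 1 := by
    rw [← Real.rpow_natCast ((r:ℝ)^(-(1:ℝ)/3)) 2, ← Real.rpow_mul hrR.le,
      ← Real.rpow_add hrR]
    norm_num
  have hn2 : (n:ℝ)^((2:ℝ)/3) * ((n:ℝ)^(-(1:ℝ)/3))^2 = 1 := by
    rw [← Real.rpow_natCast ((n:ℝ)^(-(1:ℝ)/3)) 2, ← Real.rpow_mul hnR.le,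
      ← Real.rpow_add hnR]
    norm_num
  have hm1 : (m:ℝ) * δ₁^2 ≤ a₁ * b^2 := by
    have hfl : (m:ℝ) ≤ a₁ * (r:ℝ)^((2:ℝ)/3) := by
      rw [hm]; exact Nat.floor_le (by positivity)
    calc (m:ℝ) * δ₁^2 ≤ (a₁ * (r:ℝ)^((2:ℝ)/3)) * δ₁^2 :=
          mul_le_mul_of_nonneg_right hfl (sq_nonneg _)
      _ = a₁ * b^2 * ((r:ℝ)^((2:ℝ)/3) * ((r:ℝ)^(-(1:ℝ)/3))^2) := by
          rw [hδ₁]; ring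
      _ = a₁ * b^2 := by rw [hr2, mul_one]
  have hm2 : ((N - m : ℕ):ℝ) * δ₂^2 ≤ a₂ * b^2 := by
    have hfl : ((N - m : ℕ):ℝ) ≤ a₂ * (n:ℝ)^((2:ℝ)/3) := by
      rw [hNm]; exact Nat.floor_le (by positivity)
    calc ((N - m : ℕ):ℝ) * δ₂^2 ≤ (a₂ * (n:ℝ)^((2:ℝ)/3)) * δ₂^2 :=
          mul_le_mul_of_nonneg_right hfl (sq_nonneg _)
      _ = a₂ * b^2 * ((n:ℝ)^((2:ℝ)/3) * ((n:ℝ)^(-(1:ℝ)/3))^2) := by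
          rw [hδ₂]; ring
      _ = a₂ * b^2 := by rw [hn2, mul_one]
  have hsum : ∑ i : Fin N, 8 * (δi i)^2 ≤ 8 * (a₁ + a₂) * b^2 := by
    have : ∑ i : Fin N, 8 * (δi i)^2
        = (m:ℝ) * (8 * δ₁^2) + ((N - m : ℕ):ℝ) * (8 * δ₂^2) := by
      rw [← RN_sum_ite N m hmN (8 * δ₁^2) (8 * δ₂^2)]
      refine Finset.sum_congr rfl fun i _ => ?_
      rw [hδi]; dsimp only; split <;> rfl
    rw [this]; nlinarith [hm1, hm2]
  calc ∏ i : Fin N, (1 - 2*δi i)^2 / (1 - 4*δi i)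
      ≤ ∏ i : Fin N, Real.exp (8 * (δi i)^2) :=
        Finset.prod_le_prod (fun i _ => by have := h4δ i; positivity)
          (fun i _ => RN_factor_le (δi i) (hδabs i))
    _ = Real.exp (∑ i : Fin N, 8 * (δi i)^2) := (Real.exp_sum _ _).symm
    _ ≤ Real.exp (8 * (a₁ + a₂) * b^2) := Real.exp_le_exp.mpr hsum
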